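/- arXiv:1212.0115 — 2 statements merged into one kernel-verified Lean document; each statement's English description precedes it below -/
import Mathlib

section
/- Let Bⁿ be the open unit ball in ℝⁿ (n ≥ 1). Then for all x, y ∈ Bⁿ, writing t = |x−y|, one has j_{Bⁿ}(x,y) ≥ log((2 + t)/(2 − t)) = 2·artanh(t/2) ≥ t. Equivalently, the identity map from (Bⁿ, j_{Bⁿ}) to (Bⁿ, |·|) has modulus of continuity ω(t) = 2·tanh(t/2), i.e., |x−y| ≤ 2·tanh(j_{Bⁿ}(x,y)/2). -/
open Set Metric

/-- The Euclidean distance from a point to the boundary of `G`. -/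
noncomputable def bdist {n : ℕ} (G : Set (EuclideanSpace ℝ (Fin n)))
    (x : EuclideanSpace ℝ (Fin n)) : ℝ :=
  Metric.infDist x (frontier G)

/-- The quasihyperbolic length of a path `γ` (parametrized on `[0,1]`) in `G`. -/
noncomputable def qhLength {n : ℕ} (G : Set (EuclideanSpace ℝ (Fin n)))
    (γ : ℝ → EuclideanSpace ℝ (Fin n)) : ℝ :=
  ∫ t in (0:ℝ)..1, ‖deriv γ t‖ / bdist G (γ t)

/-- The quasihyperbolic metric of `G`: the infimum of quasihyperbolic lengths of
paths joining `x` and `y` inside `G`. -/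
noncomputable def qhDist {n : ℕ} (G : Set (EuclideanSpace ℝ (Fin n)))
    (x y : EuclideanSpace ℝ (Fin n)) : ℝ :=
  ⨅ γ : {γ : ℝ → EuclideanSpace ℝ (Fin n) // γ 0 = x ∧ γ 1 = y ∧
      (∀ t ∈ Set.Icc (0:ℝ) 1, γ t ∈ G) ∧ ContDiffOn ℝ 1 γ (Set.Icc 0 1)},
    qhLength G γ.1

/-- The distance ratio metric of `G`. -/
noncomputable def jDist {n : ℕ} (G : Set (EuclideanSpace ℝ (Fin n)))
    (x y : EuclideanSpace ℝ (Fin n)) : ℝ :=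
  Real.log (1 + dist x y / min (bdist G x) (bdist G y))

/-- The inverse hyperbolic tangent. -/
noncomputable def artanh (x : ℝ) : ℝ := (1 / 2) * Real.log ((1 + x) / (1 - x))

lemma tanh_eq' (u : ℝ) : Real.tanh u = 1 - 2 / (Real.exp (2*u) + 1) := by
  rw [Real.tanh_eq_sinh_div_cosh, Real.sinh_eq, Real.cosh_eq, two_mul, Real.exp_add,
    Real.exp_neg]
  have h1 : Real.exp u ≠ 0 := Real.exp_ne_zero u
  have h2 : (0:ℝ) < Real.exp u + (Real.exp u)⁻¹ := by positivity
  have h4 : (0:ℝ) < Real.exp u * Real.exp u + 1 := by positivity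
  field_simp
  ring

lemma tanh_mono' {a b : ℝ} (h : a ≤ b) : Real.tanh a ≤ Real.tanh b := by
  rw [tanh_eq', tanh_eq']
  have h1 : (0:ℝ) < Real.exp (2*a) + 1 := by positivity
  have h2 : Real.exp (2*a) ≤ Real.exp (2*b) := Real.exp_le_exp.2 (by linarith)
  gcongr

lemma key_log {t : ℝ} (h0 : 0 ≤ t) (h2 : t < 2) :
    t ≤ Real.log ((2 + t) / (2 - t)) := by
  have hne1 : Set.MapsTo (fun u : ℝ => 2 + u) (Icc 0 t) {0}ᶜ := fun u hu =>
    Set.mem_compl_singleton_iff.2 (by have := hu.1; dsimp; intro h; linarith)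
  have hne2 : Set.MapsTo (fun u : ℝ => 2 - u) (Icc 0 t) {0}ᶜ := fun u hu =>
    Set.mem_compl_singleton_iff.2 (by have := hu.2; dsimp; intro h; linarith)
  set f : ℝ → ℝ := fun u => Real.log (2 + u) - Real.log (2 - u) - u with hf
  have hd : ∀ u ∈ Ioo (0:ℝ) t, HasDerivAt f (1/(2+u) + 1/(2-u) - 1) u := by
    intro u hu
    have hu1 : (2:ℝ) + u ≠ 0 := by have := hu.1; intro h; linarith
    have hu2 : (2:ℝ) - u ≠ 0 := by have := hu.2; intro h; linarith
    have d1 : HasDerivAt (fun u : ℝ => Real.log (2 + u)) (1/(2+u)) u := by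
      simpa using ((hasDerivAt_id u).const_add 2).log hu1
    have d2 : HasDerivAt (fun u : ℝ => Real.log (2 - u)) (-1/(2-u)) u := by
      simpa using ((hasDerivAt_id u).const_sub 2).log hu2
    have := (d1.sub d2).sub (hasDerivAt_id u)
    rw [show (1/(2+u) + 1/(2-u) - 1 : ℝ) = 1/(2+u) - -1/(2-u) - 1 by ring]
    exact this
  have hcont : ContinuousOn f (Icc 0 t) :=
    ((Real.continuousOn_log.comp (by fun_prop) hne1).sub
      (Real.continuousOn_log.comp (by fun_prop) hne2)).sub continuousOn_id
  have hmono : MonotoneOn f (Icc 0 t) := by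
    apply monotoneOn_of_deriv_nonneg (convex_Icc 0 t) hcont
    · intro u hu
      rw [interior_Icc] at hu
      exact (hd u hu).differentiableAt.differentiableWithinAt
    · intro u hu
      rw [interior_Icc] at hu
      rw [(hd u hu).deriv]
      have hu1 : (0:ℝ) < 2 + u := by have := hu.1; linarith
      have hu2 : (0:ℝ) < 2 - u := by have := hu.2; linarith
      rw [div_add_div _ _ (ne_of_gt hu1) (ne_of_gt hu2), sub_nonneg,
        le_div_iff₀ (by positivity)]
      nlinarith [sq_nonneg u]
  have h00 : (0:ℝ) ∈ Icc (0:ℝ) t := ⟨le_refl _, h0⟩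
  have htt : t ∈ Icc (0:ℝ) t := ⟨h0, le_refl _⟩
  have := hmono h00 htt h0
  simp only [hf] at this
  rw [Real.log_div (by linarith) (by linarith)]
  simp at this
  linarith

lemma bdist_ball {n : ℕ} (hn : 1 ≤ n) (x : EuclideanSpace ℝ (Fin n))
    (hx : ‖x‖ < 1) : bdist (Metric.ball (0 : EuclideanSpace ℝ (Fin n)) 1) x = 1 - ‖x‖ := by
  have he : ‖EuclideanSpace.single (⟨0, hn⟩ : Fin n) (1:ℝ)‖ = 1 := by
    rw [EuclideanSpace.norm_single]; simp
  haveI : Nontrivial (EuclideanSpace ℝ (Fin n)) := by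
    refine nontrivial_of_ne (EuclideanSpace.single (⟨0, hn⟩ : Fin n) (1:ℝ)) 0 ?_
    intro h
    rw [h] at he; simp at he
  have hsn : (sphere (0 : EuclideanSpace ℝ (Fin n)) 1).Nonempty :=
    NormedSpace.sphere_nonempty.2 zero_le_one
  rw [bdist, frontier_ball (0 : EuclideanSpace ℝ (Fin n)) one_ne_zero]
  apply le_antisymm
  · rcases eq_or_ne x 0 with rfl | hx0
    · have hm : EuclideanSpace.single (⟨0, hn⟩ : Fin n) (1:ℝ)
          ∈ sphere (0 : EuclideanSpace ℝ (Fin n)) 1 := by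
        simp [mem_sphere_zero_iff_norm, he]
      calc infDist 0 (sphere (0 : EuclideanSpace ℝ (Fin n)) 1)
          ≤ dist 0 (EuclideanSpace.single (⟨0, hn⟩ : Fin n) (1:ℝ)) :=
            infDist_le_dist_of_mem hm
        _ = 1 - ‖(0 : EuclideanSpace ℝ (Fin n))‖ := by
            rw [dist_eq_norm]; simp [he]
    · have hxn : (0:ℝ) < ‖x‖ := norm_pos_iff.2 hx0
      have hz : ‖x‖⁻¹ • x ∈ sphere (0 : EuclideanSpace ℝ (Fin n)) 1 := by
        rw [mem_sphere_zero_iff_norm, norm_smul]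
        simp [abs_of_pos (inv_pos.2 hxn), inv_mul_cancel₀ (ne_of_gt hxn)]
      calc infDist x (sphere (0 : EuclideanSpace ℝ (Fin n)) 1) ≤ dist x (‖x‖⁻¹ • x) :=
            infDist_le_dist_of_mem hz
        _ = 1 - ‖x‖ := by
            rw [dist_eq_norm]
            have hrw : x - ‖x‖⁻¹ • x = (1 - ‖x‖⁻¹) • x := by
              rw [sub_smul, one_smul]
            rw [hrw, norm_smul, Real.norm_eq_abs]
            have h1 : (1:ℝ) - ‖x‖⁻¹ ≤ 0 := by
              rw [sub_nonpos, le_inv_comm₀ one_pos hxn]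
              simpa using hx.le
            rw [abs_of_nonpos h1]
            field_simp
            ring
  · by_contra hcon
    rw [not_le, infDist_lt_iff hsn] at hcon
    obtain ⟨z, hz, hlt⟩ := hcon
    rw [mem_sphere_zero_iff_norm] at hz
    have h1 : ‖z‖ - ‖x‖ ≤ ‖z - x‖ := norm_sub_norm_le z x
    rw [hz, norm_sub_rev] at h1
    rw [dist_eq_norm] at hlt
    linarith

theorem stmt_10 (n : ℕ) (hn : 1 ≤ n) (x y : EuclideanSpace ℝ (Fin n))
    (hx : x ∈ Metric.ball (0 : EuclideanSpace ℝ (Fin n)) 1)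
    (hy : y ∈ Metric.ball (0 : EuclideanSpace ℝ (Fin n)) 1) :
    Real.log ((2 + dist x y) / (2 - dist x y)) ≤
      jDist (Metric.ball (0 : EuclideanSpace ℝ (Fin n)) 1) x y ∧
    Real.log ((2 + dist x y) / (2 - dist x y)) = 2 * artanh (dist x y / 2) ∧
    dist x y ≤ Real.log ((2 + dist x y) / (2 - dist x y)) ∧
    dist x y ≤ 2 * Real.tanh
      (jDist (Metric.ball (0 : EuclideanSpace ℝ (Fin n)) 1) x y / 2) := by
  have hx1 : ‖x‖ < 1 := mem_ball_zero_iff.1 hx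
  have hy1 : ‖y‖ < 1 := mem_ball_zero_iff.1 hy
  set t := dist x y with ht
  have ht0 : 0 ≤ t := dist_nonneg
  have htxy : t ≤ ‖x‖ + ‖y‖ := by rw [ht, dist_eq_norm]; exact norm_sub_le x y
  have ht2 : t < 2 := lt_of_le_of_lt htxy (by linarith)
  have hbx := bdist_ball hn x hx1
  have hby := bdist_ball hn y hy1
  set m := min (1 - ‖x‖) (1 - ‖y‖) with hm
  have hm0 : 0 < m := lt_min (by linarith) (by linarith)
  have hmx : m ≤ 1 - ‖x‖ := min_le_left _ _
  have hmy : m ≤ 1 - ‖y‖ := min_le_right _ _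
  have hj : jDist (Metric.ball (0 : EuclideanSpace ℝ (Fin n)) 1) x y
      = Real.log (1 + t / m) := by
    rw [jDist, hbx, hby]
  have hRpos : (0:ℝ) < (2 + t) / (2 - t) := div_pos (by linarith) (by linarith)
  have hineq : (2 + t) / (2 - t) ≤ 1 + t / m := by
    have h1 : 1 + t / m = (m + t) / m := by field_simp
    rw [h1, div_le_div_iff₀ (by linarith) hm0]
    nlinarith [mul_nonneg ht0 (show (0:ℝ) ≤ 2 - t - 2 * m by linarith)]
  have c1 : Real.log ((2 + t) / (2 - t)) ≤
      jDist (Metric.ball (0 : EuclideanSpace ℝ (Fin n)) 1) x y := by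
    rw [hj]
    exact Real.log_le_log hRpos hineq
  refine ⟨c1, ?_, key_log ht0 ht2, ?_⟩
  · rw [artanh]
    rw [show (1 + t/2) / (1 - t/2) = (2 + t) / (2 - t) by
      rw [div_eq_div_iff (by linarith) (by linarith)]; ring]
    ring
  · have htanh : Real.tanh (Real.log ((2 + t) / (2 - t)) / 2) = t / 2 := by
      rw [tanh_eq']
      rw [show 2 * (Real.log ((2 + t) / (2 - t)) / 2) = Real.log ((2 + t) / (2 - t)) by ring]
      rw [Real.exp_log hRpos]
      have hne : (2:ℝ) - t ≠ 0 := by linarith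
      have h1 : (2 + t) / (2 - t) + 1 = 4 / (2 - t) := by
        field_simp
        ring
      rw [h1, div_div_eq_mul_div]
      ring
    have := tanh_mono' (by linarith :
      Real.log ((2 + t) / (2 - t)) / 2 ≤ jDist (Metric.ball (0 : EuclideanSpace ℝ (Fin n)) 1) x y / 2)
    rw [htanh] at this
    linarith
end

section
/- Let G ⊊ ℝⁿ be a domain (nonempty open connected proper subset) with finite diameter, and set r = sqrt(n/(2n+2))·diam(G). Then for all distinct x, y ∈ G, writing t = |x−y|/r, one has j_G(x,y) ≥ log((2 + t)/(2 − t)) ≥ t. Equivalently, the identity map from (G, j_G) to (G, |·|) has modulus of continuity ω(t) = 2r·tanh(t/2). -/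
open Set Metric

/-- The elementary inequality `t ≤ log((2+t)/(2-t)) = 2 artanh(t/2)` for `0 ≤ t < 2`. -/
lemma two_artanh_half_ge (t : ℝ) (h0 : 0 ≤ t) (h2 : t < 2) :
    t ≤ Real.log ((2 + t) / (2 - t)) := by
  rcases eq_or_lt_of_le h0 with rfl | h0'
  · simp
  have key : ∀ u ∈ Set.Icc (0:ℝ) t, HasDerivAt (fun u => Real.log (2+u) - Real.log (2-u) - u)
      (1/(2+u) + 1/(2-u) - 1) u := by
    intro u hu
    have hu1 : (2:ℝ) + u ≠ 0 := by nlinarith [hu.1, hu.2]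
    have hu2 : (2:ℝ) - u ≠ 0 := by nlinarith [hu.1, hu.2]
    have h1 : HasDerivAt (fun u : ℝ => Real.log (2+u)) (1/(2+u)) u := by
      simpa using (((hasDerivAt_id u).const_add 2).log hu1)
    have h3 : HasDerivAt (fun u : ℝ => Real.log (2-u)) (-1/(2-u)) u := by
      simpa using (((hasDerivAt_id u).const_sub 2).log hu2)
    exact ((h1.sub h3).sub (hasDerivAt_id u)).congr_deriv (by ring)
  have mono : MonotoneOn (fun u => Real.log (2+u) - Real.log (2-u) - u) (Set.Icc 0 t) := by
    apply monotoneOn_of_deriv_nonneg (convex_Icc 0 t)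
    · exact fun u hu => ((key u hu).continuousAt).continuousWithinAt
    · intro u hu
      rw [interior_Icc] at hu
      exact ((key u (Set.mem_Icc_of_Ioo hu)).differentiableAt).differentiableWithinAt
    · intro u hu
      rw [interior_Icc] at hu
      rw [((key u (Set.mem_Icc_of_Ioo hu)).deriv)]
      have ha : (0:ℝ) < 2 + u := by nlinarith [hu.1, hu.2]
      have hb : (0:ℝ) < 2 - u := by nlinarith [hu.1, hu.2]
      have : 1/(2+u) + 1/(2-u) - 1 = u^2/((2+u)*(2-u)) := by field_simp; ring
      rw [this]; positivity
  have := mono (Set.left_mem_Icc.2 h0) (Set.right_mem_Icc.2 h0) h0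
  simp only at this
  rw [Real.log_div (by linarith) (by linarith)]
  simpa using this

lemma tanh_half_eq (a : ℝ) : Real.tanh (a/2) = (Real.exp a - 1)/(Real.exp a + 1) := by
  have hb : (0:ℝ) < Real.exp (a/2) := Real.exp_pos _
  have hsq : Real.exp (a/2) * Real.exp (a/2) = Real.exp a := by
    rw [← Real.exp_add]; ring_nf
  rw [Real.tanh_eq_sinh_div_cosh, Real.sinh_eq, Real.cosh_eq, Real.exp_neg]
  rw [div_div_div_cancel_right₀]
  · field_simp
    nlinarith [hsq]
  · positivity

lemma ball_bdist_subset {n : ℕ} {G : Set (EuclideanSpace ℝ (Fin n))} (hGo : IsOpen G)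
    {x : EuclideanSpace ℝ (Fin n)} (hx : x ∈ G) :
    ball x (bdist G x) ⊆ G := by
  rcases le_or_gt (bdist G x) 0 with h | h
  · rw [ball_eq_empty.2 h]; exact empty_subset _
  apply IsPreconnected.subset_left_of_subset_union hGo (isClosed_closure (s := G)).isOpen_compl
  · exact disjoint_compl_right.mono_left subset_closure
  · intro p hp
    have hpf : p ∉ frontier G := fun hpf =>
      (disjoint_ball_infDist (x := x) (s := frontier G)).le_bot ⟨hp, hpf⟩
    rw [hGo.frontier_eq] at hpf
    by_cases hpG : p ∈ G
    · exact Or.inl hpG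
    · exact Or.inr fun hpc => hpf ⟨hpc, hpG⟩
  · exact ⟨x, mem_ball_self h, hx⟩
  · exact (convex_ball x _).isPreconnected

lemma closedBall_bdist_subset {n : ℕ} {G : Set (EuclideanSpace ℝ (Fin n))} (hGo : IsOpen G)
    (hGp : G ≠ Set.univ) {x : EuclideanSpace ℝ (Fin n)} (hx : x ∈ G) :
    closedBall x (bdist G x) ⊆ closure G := by
  have hc : Gᶜ.Nonempty := by
    rcases Set.nonempty_compl.2 hGp with ⟨z, hz⟩; exact ⟨z, hz⟩
  have hle : bdist G x ≤ Metric.infDist x Gᶜ := by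
    by_contra hlt
    push_neg at hlt
    rcases (Metric.infDist_lt_iff hc).1 hlt with ⟨z, hz, hdz⟩
    exact hz (ball_bdist_subset hGo hx (by rwa [mem_ball, dist_comm]))
  exact (closedBall_subset_closedBall hle).trans
    (Metric.closedBall_infDist_compl_subset_closure hx)

lemma sum_bdist_le {n : ℕ} {G : Set (EuclideanSpace ℝ (Fin n))} (hGo : IsOpen G)
    (hGp : G ≠ Set.univ) (hGb : Bornology.IsBounded G)
    {x y : EuclideanSpace ℝ (Fin n)} (hx : x ∈ G) (hy : y ∈ G) (hxy : x ≠ y) :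
    dist x y + bdist G x + bdist G y ≤ Metric.diam G := by
  set d : ℝ := dist x y with hd
  have hd0 : 0 < d := dist_pos.2 hxy
  set s : EuclideanSpace ℝ (Fin n) := x - y with hs
  have hns : ‖s‖ = d := by rw [hs, hd, dist_eq_norm]
  set e : EuclideanSpace ℝ (Fin n) := ‖s‖⁻¹ • s with he
  have hne : ‖e‖ = 1 := by
    rw [he, norm_smul, norm_inv, norm_norm, inv_mul_cancel₀ (by rw [hns]; positivity)]
  have hbx : 0 ≤ bdist G x := Metric.infDist_nonneg
  have hby : 0 ≤ bdist G y := Metric.infDist_nonneg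
  set u : EuclideanSpace ℝ (Fin n) := x + bdist G x • e with hu
  set v : EuclideanSpace ℝ (Fin n) := y - bdist G y • e with hv
  have hux : u ∈ closedBall x (bdist G x) := by
    rw [mem_closedBall, hu, dist_eq_norm]
    simp [norm_smul, hne, abs_of_nonneg hbx]
  have hvy : v ∈ closedBall y (bdist G y) := by
    rw [mem_closedBall, hv, dist_eq_norm]
    simp [norm_smul, hne, abs_of_nonneg hby]
  have huG := closedBall_bdist_subset hGo hGp hx hux
  have hvG := closedBall_bdist_subset hGo hGp hy hvy
  have hduv : dist u v = d + bdist G x + bdist G y := by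
    have huv : u - v = (1 + (bdist G x + bdist G y) / d) • s := by
      rw [hu, hv, he, hns]
      rw [smul_smul]
      module
    rw [dist_eq_norm, huv, norm_smul, hns]
    rw [Real.norm_of_nonneg (by positivity)]
    field_simp
    ring
  have := Metric.dist_le_diam_of_mem hGb.closure huG hvG
  rw [hduv, Metric.diam_closure] at this
  linarith

set_option maxHeartbeats 1000000 in
theorem stmt_11 (n : ℕ) (G : Set (EuclideanSpace ℝ (Fin n)))
    (hGo : IsOpen G) (hGc : IsConnected G) (hGp : G ≠ Set.univ)
    (hGb : Bornology.IsBounded G)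
    (r : ℝ) (hr : r = Real.sqrt ((n : ℝ) / (2 * n + 2)) * Metric.diam G)
    (x y : EuclideanSpace ℝ (Fin n)) (hx : x ∈ G) (hy : y ∈ G) (hxy : x ≠ y)
    (t : ℝ) (ht : t = dist x y / r) :
    Real.log ((2 + t) / (2 - t)) ≤ jDist G x y ∧
    t ≤ Real.log ((2 + t) / (2 - t)) ∧
    dist x y ≤ 2 * r * Real.tanh (jDist G x y / 2) := by
  -- the dimension is positive
  have hn : 1 ≤ n := by
    by_contra hn
    push_neg at hn
    have hn0 : n = 0 := by omega
    subst hn0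
    exact hxy (by
      have : dist x y = 0 := by
        rw [EuclideanSpace.dist_eq]
        simp
      exact dist_eq_zero.1 this)
  have hn1 : (1:ℝ) ≤ (n:ℝ) := by exact_mod_cast hn
  set d : ℝ := dist x y with hd
  have hd0 : 0 < d := dist_pos.2 hxy
  -- positivity of the boundary distances
  have hfne : (frontier G).Nonempty := by
    rw [nonempty_frontier_iff]
    exact ⟨hGc.nonempty, hGp⟩
  have hbpos : ∀ z ∈ G, 0 < bdist G z := by
    intro z hz
    refine (isClosed_frontier.notMem_iff_infDist_pos hfne).1 ?_
    rw [hGo.frontier_eq]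
    exact fun h => h.2 hz
  have hbx : 0 < bdist G x := hbpos x hx
  have hby : 0 < bdist G y := hbpos y hy
  set m : ℝ := min (bdist G x) (bdist G y) with hm
  have hm0 : 0 < m := lt_min hbx hby
  set D : ℝ := Metric.diam G with hD
  have hsum : d + bdist G x + bdist G y ≤ D := sum_bdist_le hGo hGp hGb hx hy hxy
  have hkey : 2 * m + d ≤ D := by
    have h1 : m ≤ bdist G x := min_le_left _ _
    have h2 : m ≤ bdist G y := min_le_right _ _
    linarith
  have hdD : d < D := by linarith
  have hD0 : 0 < D := lt_trans hd0 hdD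
  -- the square-root factor is at least 1/2
  have hsq : (1:ℝ)/2 ≤ Real.sqrt ((n : ℝ) / (2 * n + 2)) := by
    rw [Real.le_sqrt (by norm_num) (by positivity)]
    rw [show ((1:ℝ)/2)^2 = 1/4 by norm_num, div_le_div_iff₀ (by norm_num) (by positivity)]
    nlinarith
  have hr0 : 0 < r := by
    rw [hr]; nlinarith
  have hD2r : D ≤ 2 * r := by
    rw [hr]; nlinarith
  have hm3 : m ≤ r - d / 2 := by linarith
  have hrd : 0 < 2 * r - d := by linarith
  have ht0 : 0 ≤ t := by rw [ht]; positivity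
  have ht2 : t < 2 := by
    rw [ht, div_lt_iff₀ hr0]; linarith
  -- rewrite (2+t)/(2-t) in terms of d and r
  have heq : (2 + t) / (2 - t) = (2*r + d) / (2*r - d) := by
    have h1 : 2 + t = (2*r + d)/r := by rw [ht]; field_simp
    have h2 : 2 - t = (2*r - d)/r := by rw [ht]; field_simp
    rw [h1, h2, div_div_div_cancel_right₀]
    exact ne_of_gt hr0
  have hfrac : (2*r + d) / (2*r - d) ≤ 1 + d / m := by
    have hm' : (1:ℝ) + d/m = (m + d)/m := by
      rw [add_div, div_self (ne_of_gt hm0), add_comm]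
    rw [hm', div_le_div_iff₀ hrd hm0]
    nlinarith
  have hpos1 : 0 < (2*r + d) / (2*r - d) := by positivity
  have part1 : Real.log ((2 + t) / (2 - t)) ≤ jDist G x y := by
    rw [heq, jDist, ← hd, ← hm]
    exact Real.log_le_log hpos1 hfrac
  have part2 : t ≤ Real.log ((2 + t) / (2 - t)) := two_artanh_half_ge t ht0 ht2
  refine ⟨part1, part2, ?_⟩
  -- part 3
  set j : ℝ := jDist G x y with hj
  have hexp : (2 + t) / (2 - t) ≤ Real.exp j := by
    have := Real.exp_le_exp.2 part1
    rwa [Real.exp_log (by rw [heq]; exact hpos1)] at this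
  have hE : 0 < Real.exp j := Real.exp_pos _
  have h2t : 0 < 2 - t := by linarith
  have hcross : 2 + t ≤ Real.exp j * (2 - t) := by
    rw [div_le_iff₀ h2t] at hexp
    linarith
  have htanh : t / 2 ≤ Real.tanh (j / 2) := by
    rw [tanh_half_eq]
    rw [div_le_div_iff₀ (by norm_num) (by positivity)]
    nlinarith
  have hdt : d = r * t := by
    rw [ht]; field_simp
  rw [hdt]
  nlinarith [mul_le_mul_of_nonneg_left htanh hr0.le]
end
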